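/- Let S and A be finite nonempty types, γ ∈ (0,1), R : S × A → ℝ a reward function with R(s,a) ≤ 1 for all (s,a), π : S → A a policy, s₁ ∈ S a start state, H ∈ ℕ a horizon, and K ⊆ S × A. Let T and T' be two transition functions that agree on K, i.e., T s a = T' s a whenever (s,a) ∈ K. Assume that R(s', π s') ≥ 0 for every state s' that is the endpoint of some path of length at most H from s₁ with positive probability under T and π. Let Pr(A) denote the probability, under T and π starting from s₁, of the set of length-H paths (s₀,…,s_H) for which (s_t, π(s_t)) ∉ K for some t ∈ {0,…,H}. Then the H-horizon values satisfy V_T^π(s₁,H) ≥ V_{T'}^π(s₁,H) − Pr(A)/(1−γ). -/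

import Mathlib

open Finset

/-- Probability of a length-`H` path `p : Fin (H+1) → S` under transitions `T` and policy `π`:
the product of the one-step transition probabilities along the path. -/
noncomputable def pathProb {S A : Type*} (T : S → A → S → ℝ) (π : S → A) (H : ℕ)
    (p : Fin (H + 1) → S) : ℝ :=
  ∏ t : Fin H, T (p t.castSucc) (π (p t.castSucc)) (p t.succ)

/-- `H`-horizon value of policy `π` from state `s`: the sum over all length-`H` paths
starting at `s` of the path probability times the discounted cumulative reward. -/
noncomputable def valueH {S A : Type*} [Fintype S] [DecidableEq S]
    (T : S → A → S → ℝ) (R : S → A → ℝ) (γ : ℝ) (π : S → A) (H : ℕ) (s : S) : ℝ :=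
  ∑ p ∈ Finset.univ.filter (fun p : Fin (H + 1) → S => p 0 = s),
    pathProb T π H p * ∑ t : Fin (H + 1), γ ^ (t : ℕ) * R (p t) (π (p t))

lemma pathProb_nonneg {S A : Type*} (T : S → A → S → ℝ) (hT0 : ∀ s a s', 0 ≤ T s a s')
    (π : S → A) (H : ℕ) (p : Fin (H + 1) → S) : 0 ≤ pathProb T π H p :=
  Finset.prod_nonneg fun _ _ => hT0 _ _ _

lemma pathProb_succ {S A : Type*} (T : S → A → S → ℝ) (π : S → A) (H : ℕ)
    (p : Fin (H + 2) → S) :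
    pathProb T π (H + 1) p = T (p 0) (π (p 0)) (p 1) * pathProb T π H (Fin.tail p) := by
  unfold pathProb
  rw [Fin.prod_univ_succ]
  congr 1
  all_goals first
    | rfl
    | exact Finset.prod_congr rfl fun t _ => by simp [Fin.tail, Fin.succ_castSucc]

lemma sum_pathProb {S A : Type*} [Fintype S] [DecidableEq S]
    (T : S → A → S → ℝ) (hT1 : ∀ s a, ∑ s', T s a s' = 1) (π : S → A) :
    ∀ (H : ℕ) (s : S),
      ∑ p ∈ Finset.univ.filter (fun p : Fin (H + 1) → S => p 0 = s), pathProb T π H p = 1 := by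
  intro H
  induction H with
  | zero =>
    intro s
    have : (Finset.univ.filter (fun p : Fin 1 → S => p 0 = s)) = {fun _ => s} := by
      ext p
      simp only [mem_filter, mem_univ, true_and, mem_singleton]
      constructor
      · intro h; funext i; rw [Subsingleton.elim i 0]; exact h
      · intro h; rw [h]
    rw [this, Finset.sum_singleton]
    simp [pathProb]
  | succ H ih =>
    intro s
    rw [Finset.sum_filter]
    rw [Fintype.sum_equiv (Fin.consEquiv (fun _ : Fin (H + 2) => S)).symm _
        (fun q : S × (Fin (H + 1) → S) =>
          if q.1 = s then T q.1 (π q.1) (q.2 0) * pathProb T π H q.2 else 0)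
        (fun p => by
          simp only [Fin.consEquiv_symm_apply]
          rw [pathProb_succ]
          rfl)]
    rw [Fintype.sum_prod_type]
    rw [Finset.sum_eq_single_of_mem s (Finset.mem_univ s) (fun b _ hb => by simp [hb])]
    have hx : (∑ y : Fin (H + 1) → S,
        if ((s, y) : S × (Fin (H + 1) → S)).1 = s then
          T (s, y).1 (π (s, y).1) ((s, y).2 0) * pathProb T π H (s, y).2 else 0)
        = ∑ y : Fin (H + 1) → S, T s (π s) (y 0) * pathProb T π H y :=
      Finset.sum_congr rfl (fun y _ => by simp)
    rw [hx]
    rw [← Finset.sum_fiberwise Finset.univ (fun q : Fin (H + 1) → S => q 0)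
        (fun q => T s (π s) (q 0) * pathProb T π H q)]
    rw [← hT1 s (π s)]
    refine Finset.sum_congr rfl fun s' _ => ?_
    rw [Finset.sum_congr rfl (fun q hq => ?_), ← Finset.mul_sum, ih s', mul_one]
    rw [(Finset.mem_filter.1 hq).2]

lemma pathProb_factor_pos {S A : Type*} (T : S → A → S → ℝ) (hT0 : ∀ s a s', 0 ≤ T s a s')
    (π : S → A) (H : ℕ) (p : Fin (H + 1) → S) (hpos : 0 < pathProb T π H p) (t : Fin H) :
    0 < T (p t.castSucc) (π (p t.castSucc)) (p t.succ) := by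
  rcases (hT0 (p t.castSucc) (π (p t.castSucc)) (p t.succ)).lt_or_eq with h | h
  · exact h
  · exfalso
    have : pathProb T π H p = 0 := Finset.prod_eq_zero (Finset.mem_univ t) h.symm
    linarith

lemma pathProb_prefix_pos {S A : Type*} (T : S → A → S → ℝ) (hT0 : ∀ s a s', 0 ≤ T s a s')
    (π : S → A) (H : ℕ) (p : Fin (H + 1) → S) (hpos : 0 < pathProb T π H p)
    (t : ℕ) (ht : t ≤ H) :
    0 < pathProb T π t (fun i => p (Fin.castLE (by omega) i)) := by
  apply Finset.prod_pos
  intro j _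
  have hj : (j : ℕ) < H := lt_of_lt_of_le j.isLt ht
  have h := pathProb_factor_pos T hT0 π H p hpos ⟨j, hj⟩
  convert h using 3
  · rfl
  · exact Fin.ext (by simp)
  · exact congrArg p (Fin.ext (by simp))
  · exact Fin.ext (by simp)

open Classical in
theorem escape_prob
    {S A : Type*} [Fintype S] [DecidableEq S] [Nonempty S] [Fintype A] [Nonempty A]
    (γ : ℝ) (hγ0 : 0 < γ) (hγ1 : γ < 1)
    (R : S → A → ℝ) (hR1 : ∀ s a, R s a ≤ 1)
    (π : S → A) (s₁ : S) (H : ℕ) (K : Set (S × A))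
    (T T' : S → A → S → ℝ)
    (hT0 : ∀ s a s', 0 ≤ T s a s') (hT1 : ∀ s a, ∑ s', T s a s' = 1)
    (hT'0 : ∀ s a s', 0 ≤ T' s a s') (hT'1 : ∀ s a, ∑ s', T' s a s' = 1)
    (hagree : ∀ s a, (s, a) ∈ K → T s a = T' s a)
    -- every state reachable from `s₁` with positive probability within `H` steps
    -- yields a nonnegative reward under `π`
    (hnonneg : ∀ (t : ℕ), t ≤ H → ∀ p : Fin (t + 1) → S, p 0 = s₁ →
      0 < pathProb T π t p → 0 ≤ R (p (Fin.last t)) (π (p (Fin.last t)))) :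
    valueH T R γ π H s₁ ≥ valueH T' R γ π H s₁ -
      (∑ p ∈ Finset.univ.filter (fun p : Fin (H + 1) → S =>
          p 0 = s₁ ∧ ∃ t, (p t, π (p t)) ∉ K), pathProb T π H p) / (1 - γ) := by
  -- proof
  classical
  have h1γ : 0 < 1 - γ := by linarith
  set G : (Fin (H + 1) → S) → ℝ :=
    fun p => ∑ t : Fin (H + 1), γ ^ (t : ℕ) * R (p t) (π (p t)) with hGdef
  -- upper bound on discounted returns
  have hGub : ∀ p : Fin (H + 1) → S, G p ≤ 1 / (1 - γ) := by
    intro p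
    have h1 : G p ≤ ∑ t : Fin (H + 1), γ ^ (t : ℕ) := by
      apply Finset.sum_le_sum
      intro t _
      have h := hR1 (p t) (π (p t))
      have hp : (0:ℝ) ≤ γ ^ (t : ℕ) := pow_nonneg hγ0.le _
      nlinarith
    have h2 : ∑ t : Fin (H + 1), γ ^ (t : ℕ) ≤ 1 / (1 - γ) := by
      rw [Fin.sum_univ_eq_sum_range (fun i => γ ^ i)]
      have hp : (0:ℝ) ≤ γ ^ (H + 1) := pow_nonneg hγ0.le _
      rw [geom_sum_eq (ne_of_lt hγ1)]
      rw [show (γ ^ (H + 1) - 1) / (γ - 1) = (1 - γ ^ (H + 1)) / (1 - γ) by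
        rw [div_eq_div_iff (by linarith) (by linarith)]; ring]
      rw [div_le_div_iff₀ h1γ h1γ]
      nlinarith
    linarith
  -- nonnegativity of returns along positive-probability paths
  have hGpos : ∀ p : Fin (H + 1) → S, p 0 = s₁ → 0 < pathProb T π H p → 0 ≤ G p := by
    intro p hp0 hpos
    apply Finset.sum_nonneg
    intro t _
    apply mul_nonneg (pow_nonneg hγ0.le _)
    have ht : (t : ℕ) ≤ H := Nat.lt_succ_iff.mp t.isLt
    have hq := pathProb_prefix_pos T hT0 π H p hpos t ht
    have hres := hnonneg t ht (fun i => p (Fin.castLE (by omega) i)) hp0 hq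
    convert hres using 3
    · rfl
    · exact (Fin.ext (by simp))
    · exact congrArg p (Fin.ext (by simp))
  -- splitting sums over paths
  have e1 : Finset.univ.filter
        (fun p : Fin (H + 1) → S => p 0 = s₁ ∧ ∀ t, (p t, π (p t)) ∈ K)
      = (Finset.univ.filter (fun p : Fin (H + 1) → S => p 0 = s₁)).filter
        (fun p => ∀ t, (p t, π (p t)) ∈ K) := by
    ext p; simp
  have e2 : Finset.univ.filter
        (fun p : Fin (H + 1) → S => p 0 = s₁ ∧ ∃ t, (p t, π (p t)) ∉ K)
      = (Finset.univ.filter (fun p : Fin (H + 1) → S => p 0 = s₁)).filter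
        (fun p => ¬ ∀ t, (p t, π (p t)) ∈ K) := by
    ext p; simp
  have hsplit : ∀ f : (Fin (H + 1) → S) → ℝ,
      ∑ p ∈ Finset.univ.filter (fun p : Fin (H + 1) → S => p 0 = s₁), f p
        = (∑ p ∈ Finset.univ.filter
            (fun p : Fin (H + 1) → S => p 0 = s₁ ∧ ∀ t, (p t, π (p t)) ∈ K), f p)
        + ∑ p ∈ Finset.univ.filter
            (fun p : Fin (H + 1) → S => p 0 = s₁ ∧ ∃ t, (p t, π (p t)) ∉ K), f p := by
    intro f
    rw [e1, e2, Finset.sum_filter_add_sum_filter_not]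
  have htotT := sum_pathProb T hT1 π H s₁
  have htotT' := sum_pathProb T' hT'1 π H s₁
  -- T and T' agree on paths staying in K
  have hBagree : ∀ p ∈ Finset.univ.filter
      (fun p : Fin (H + 1) → S => p 0 = s₁ ∧ ∀ t, (p t, π (p t)) ∈ K),
      pathProb T π H p = pathProb T' π H p := by
    intro p hp
    have hK := (Finset.mem_filter.1 hp).2.2
    exact Finset.prod_congr rfl fun t _ => by
      rw [hagree _ _ (hK t.castSucc)]
  have hBagree' := Finset.sum_congr rfl hBagree
  have hBagreeG : ∑ p ∈ Finset.univ.filter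
        (fun p : Fin (H + 1) → S => p 0 = s₁ ∧ ∀ t, (p t, π (p t)) ∈ K),
        pathProb T π H p * G p
      = ∑ p ∈ Finset.univ.filter
        (fun p : Fin (H + 1) → S => p 0 = s₁ ∧ ∀ t, (p t, π (p t)) ∈ K),
        pathProb T' π H p * G p :=
    Finset.sum_congr rfl fun p hp => by rw [hBagree p hp]
  have h1 := hsplit (pathProb T π H)
  have h2 := hsplit (pathProb T' π H)
  have hprobA : ∑ p ∈ Finset.univ.filter
        (fun p : Fin (H + 1) → S => p 0 = s₁ ∧ ∃ t, (p t, π (p t)) ∉ K),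
        pathProb T' π H p
      = ∑ p ∈ Finset.univ.filter
        (fun p : Fin (H + 1) → S => p 0 = s₁ ∧ ∃ t, (p t, π (p t)) ∉ K),
        pathProb T π H p := by
    rw [htotT] at h1; rw [htotT'] at h2; linarith [hBagree']
  have hAnn : 0 ≤ ∑ p ∈ Finset.univ.filter
      (fun p : Fin (H + 1) → S => p 0 = s₁ ∧ ∃ t, (p t, π (p t)) ∉ K),
      pathProb T π H p * G p := by
    apply Finset.sum_nonneg
    intro p hp
    rcases (pathProb_nonneg T hT0 π H p).lt_or_eq with h | h
    · exact mul_nonneg h.le (hGpos p (Finset.mem_filter.1 hp).2.1 h)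
    · rw [← h, zero_mul]
  have hA'le : ∑ p ∈ Finset.univ.filter
        (fun p : Fin (H + 1) → S => p 0 = s₁ ∧ ∃ t, (p t, π (p t)) ∉ K),
        pathProb T' π H p * G p
      ≤ (∑ p ∈ Finset.univ.filter
        (fun p : Fin (H + 1) → S => p 0 = s₁ ∧ ∃ t, (p t, π (p t)) ∉ K),
        pathProb T π H p) / (1 - γ) := by
    calc _ ≤ ∑ p ∈ Finset.univ.filter
          (fun p : Fin (H + 1) → S => p 0 = s₁ ∧ ∃ t, (p t, π (p t)) ∉ K),
          pathProb T' π H p * (1 / (1 - γ)) :=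
        Finset.sum_le_sum fun p _ =>
          mul_le_mul_of_nonneg_left (hGub p) (pathProb_nonneg T' hT'0 π H p)
      _ = (∑ p ∈ Finset.univ.filter
          (fun p : Fin (H + 1) → S => p 0 = s₁ ∧ ∃ t, (p t, π (p t)) ∉ K),
          pathProb T' π H p) * (1 / (1 - γ)) := (Finset.sum_mul _ _ _).symm
      _ = _ := by rw [hprobA, mul_one_div]
  have hvT : valueH T R γ π H s₁ = ∑ p ∈ Finset.univ.filter
      (fun p : Fin (H + 1) → S => p 0 = s₁), pathProb T π H p * G p := rfl
  have hvT' : valueH T' R γ π H s₁ = ∑ p ∈ Finset.univ.filter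
      (fun p : Fin (H + 1) → S => p 0 = s₁), pathProb T' π H p * G p := rfl
  have h3 := hsplit (fun p => pathProb T π H p * G p)
  have h4 := hsplit (fun p => pathProb T' π H p * G p)
  rw [ge_iff_le, hvT, hvT', h3, h4]
  linarith [hBagreeG]
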